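/- arXiv:1202.0219 — 3 statements merged into one kernel-verified Lean document; each statement's English description precedes it below -/
import Mathlib

section
/- Summation formula: 𝔊_{n,q}^{(α)}(x,y) = ∑_{k=0}^n [n choose k]_q 𝔊_{k,q}^{(α)} (x+y)_q^{n-k}, where (x+y)_q^m = ∑_{j=0}^m [m choose j]_q q^{j(j-1)/2} x^{m-j} y^j and 𝔊_{k,q}^{(α)} = 𝔊_{k,q}^{(α)}(0,0). -/
open PowerSeries Finset

/-- The `q`-integer `[n]_q = 1 + q + ⋯ + q^(n-1)`. -/
noncomputable def qInt (q : ℂ) (n : ℕ) : ℂ := ∑ i ∈ Finset.range n, q ^ i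

/-- The `q`-factorial `[n]_q!`. -/
noncomputable def qFact (q : ℂ) : ℕ → ℂ
  | 0 => 1
  | n + 1 => qFact q n * qInt q (n + 1)

/-- The Gaussian (`q`-binomial) coefficient. -/
noncomputable def qBinom (q : ℂ) (n k : ℕ) : ℂ := qFact q n / (qFact q k * qFact q (n - k))

/-- The formal power series `e_q(tx) = ∑ x^n t^n/[n]_q!`. -/
noncomputable def qExpSeries (q : ℂ) (x : ℂ) : PowerSeries ℂ :=
  PowerSeries.mk fun n => x ^ n / qFact q n

/-- The formal power series `E_q(ty) = ∑ q^(n(n-1)/2) y^n t^n/[n]_q!`. -/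
noncomputable def qExpSeries' (q : ℂ) (y : ℂ) : PowerSeries ℂ :=
  PowerSeries.mk fun n => q ^ (n * (n - 1) / 2) * y ^ n / qFact q n

/-- Generating series `(2t/(e_q(t)+1))^α e_q(tx) E_q(ty)` of the `q`-Genocchi polynomials. -/
noncomputable def qGenocchiSeries (q : ℂ) (α : ℕ) (x y : ℂ) : PowerSeries ℂ :=
  (PowerSeries.C (2 : ℂ) * PowerSeries.X * (qExpSeries q 1 + 1)⁻¹) ^ α *
    qExpSeries q x * qExpSeries' q y

/-- The `q`-Genocchi polynomial `𝔊_{n,q}^{(α)}(x,y)`. -/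
noncomputable def qGenocchi (q : ℂ) (α : ℕ) (x y : ℂ) (n : ℕ) : ℂ :=
  qFact q n * PowerSeries.coeff n (qGenocchiSeries q α x y)

/-- The `q`-Bernoulli polynomial `𝔅_{n,q}(x,y)`, defined via
`(t/(e_q(t)-1)) e_q(tx) E_q(ty) = ∑ 𝔅_{n,q}(x,y) t^n/[n]_q!`
(note `t/(e_q(t)-1)` is the inverse of the series `∑ t^n/[n+1]_q!`). -/
noncomputable def qBernoulli (q : ℂ) (x y : ℂ) (n : ℕ) : ℂ :=
  qFact q n * PowerSeries.coeff n
    ((PowerSeries.mk fun k => (qFact q (k + 1))⁻¹)⁻¹ * qExpSeries q x * qExpSeries' q y)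

/-- The Gauss polynomial `(x+y)_q^n = ∑_k [n k]_q q^(k(k-1)/2) x^(n-k) y^k`. -/
noncomputable def qAddPow (q : ℂ) (x y : ℂ) (n : ℕ) : ℂ :=
  ∑ k ∈ Finset.range (n + 1), qBinom q n k * q ^ (k * (k - 1) / 2) * x ^ (n - k) * y ^ k


lemma qFact_ne_zero (q : ℂ) (hq : ∀ n : ℕ, qInt q (n + 1) ≠ 0) (n : ℕ) :
    qFact q n ≠ 0 := by
  induction n with
  | zero => simp [qFact]
  | succ m ih => exact mul_ne_zero ih (hq m)

lemma qExpSeries_zero (q : ℂ) : qExpSeries q 0 = 1 := by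
  ext n
  cases n with
  | zero => simp [qExpSeries, qFact]
  | succ m => simp [qExpSeries]

lemma qExpSeries'_zero (q : ℂ) : qExpSeries' q 0 = 1 := by
  ext n
  cases n with
  | zero => simp [qExpSeries', qFact]
  | succ m => simp [qExpSeries']

lemma coeff_qExp_mul (q : ℂ) (hq : ∀ n : ℕ, qInt q (n + 1) ≠ 0) (x y : ℂ) (m : ℕ) :
    PowerSeries.coeff m (qExpSeries q x * qExpSeries' q y) =
      qAddPow q x y m / qFact q m := by
  rw [mul_comm, PowerSeries.coeff_mul, Finset.Nat.sum_antidiagonal_eq_sum_range_succ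
    (fun i j => PowerSeries.coeff i (qExpSeries' q y) * PowerSeries.coeff j (qExpSeries q x))]
  rw [qAddPow, Finset.sum_div]
  refine Finset.sum_congr rfl fun j hj => ?_
  simp only [qExpSeries, qExpSeries', PowerSeries.coeff_mk, qBinom]
  have h1 := qFact_ne_zero q hq m
  have h2 := qFact_ne_zero q hq j
  have h3 := qFact_ne_zero q hq (m - j)
  field_simp

lemma qGenocchiSeries_eq (q : ℂ) (α : ℕ) (x y : ℂ) :
    qGenocchiSeries q α x y =
      qGenocchiSeries q α 0 0 * (qExpSeries q x * qExpSeries' q y) := by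
  rw [qGenocchiSeries, qGenocchiSeries, qExpSeries_zero, qExpSeries'_zero]
  ring

/-- Summation formula: `𝔊_{n,q}^{(α)}(x,y) = ∑_k [n k]_q 𝔊_{k,q}^{(α)} (x+y)_q^(n-k)`. -/
theorem qGenocchi_sum_formula (q : ℂ) (hq : ∀ n : ℕ, qInt q (n + 1) ≠ 0)
    (α n : ℕ) (x y : ℂ) :
    qGenocchi q α x y n =
      ∑ k ∈ Finset.range (n + 1),
        qBinom q n k * qGenocchi q α 0 0 k * qAddPow q x y (n - k) := by
  have hf := qFact_ne_zero q hq
  rw [qGenocchi, qGenocchiSeries_eq, PowerSeries.coeff_mul,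
    Finset.Nat.sum_antidiagonal_eq_sum_range_succ_mk, Finset.mul_sum]
  refine Finset.sum_congr rfl fun k hk => ?_
  rw [coeff_qExp_mul q hq]
  have hkn : k ≤ n := Nat.lt_succ_iff.mp (Finset.mem_range.mp hk)
  have hck : PowerSeries.coeff k (qGenocchiSeries q α 0 0) = qGenocchi q α 0 0 k / qFact q k := by
    rw [qGenocchi, mul_div_cancel_left₀ _ (hf k)]
  rw [hck, qBinom]
  have hsub : qFact q n = qFact q k * qFact q (n - k) *
      (qFact q n / (qFact q k * qFact q (n - k))) := by
    rw [mul_comm, div_mul_cancel₀ _ (mul_ne_zero (hf k) (hf (n - k)))]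
  field_simp
end

section
/- For the classical Genocchi and Bernoulli polynomials, G_n(x+y) = ∑_{k=0}^n C(n,k) (2/(k+1)) ((k+1) y^k − G_{k+1}(y)) B_{n-k}(x) for all n ∈ ℕ₀. -/
open PowerSeries Finset

/-- The exponential series `e^{tx} = ∑ x^n t^n/n!` over `ℚ`. -/
noncomputable def expS (x : ℚ) : PowerSeries ℚ :=
  PowerSeries.mk fun n => x ^ n / n.factorial

/-- The classical Genocchi polynomial `G_n(x)`, defined by
`(2t/(e^t+1)) e^{tx} = ∑ G_n(x) t^n/n!`. -/
noncomputable def GenocchiPoly (x : ℚ) (n : ℕ) : ℚ :=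
  n.factorial * PowerSeries.coeff (R := ℚ) n
    (PowerSeries.C (R := ℚ) 2 * PowerSeries.X * (expS 1 + 1)⁻¹ * expS x)

/-- The classical Bernoulli polynomial `B_n(x)`, defined by
`(t/(e^t-1)) e^{tx} = ∑ B_n(x) t^n/n!`
(note `t/(e^t-1)` is the inverse of the series `∑ t^n/(n+1)!`). -/
noncomputable def BernoulliPoly (x : ℚ) (n : ℕ) : ℚ :=
  n.factorial * PowerSeries.coeff (R := ℚ) n
    ((PowerSeries.mk fun k => ((k + 1).factorial : ℚ)⁻¹)⁻¹ * expS x)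

lemma expS_eq (x : ℚ) : expS x = rescale x (exp ℚ) := by
  ext n
  simp [expS, exp, div_eq_mul_inv, mul_comm]

lemma expS_mul (x y : ℚ) : expS x * expS y = expS (x + y) := by
  rw [expS_eq, expS_eq, expS_eq, exp_mul_exp_eq_exp_add]

/-- The series `(e^t - 1)/t = ∑ t^k/(k+1)!`. -/
noncomputable def Bser : PowerSeries ℚ := PowerSeries.mk fun k => ((k + 1).factorial : ℚ)⁻¹

lemma XB : X * Bser = expS 1 - 1 := by
  ext n
  cases n with
  | zero => simp [expS, Bser]
  | succ m => simp [coeff_succ_X_mul, Bser, expS, coeff_one, div_eq_mul_inv]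

/-- The Genocchi generating series `2t/(e^t+1)`. -/
noncomputable def Sser : PowerSeries ℚ := PowerSeries.C (R := ℚ) 2 * PowerSeries.X * (expS 1 + 1)⁻¹

lemma Scancel : Sser * (expS 1 + 1) = PowerSeries.C (R := ℚ) 2 * PowerSeries.X := by
  have h : constantCoeff (R := ℚ) (expS 1 + 1) ≠ 0 := by
    rw [map_add, map_one, ← coeff_zero_eq_constantCoeff_apply]
    simp [expS]
  rw [Sser, mul_assoc, PowerSeries.inv_mul_cancel _ h, mul_one]

lemma key_eq {y : ℚ} :
    X * (Sser * expS y * Bser) = C (R := ℚ) 2 * X * expS y - C (R := ℚ) 2 * (Sser * expS y) := by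
  have : X * (Sser * expS y * Bser) = Sser * expS y * (X * Bser) := by ring
  rw [this, XB, mul_sub, mul_one]
  have : Sser * expS y * expS 1 = Sser * (expS 1 + 1) * expS y - Sser * expS y := by ring
  rw [this, Scancel]
  have h2 : C (R := ℚ) 2 = (2 : PowerSeries ℚ) := map_ofNat _ 2
  rw [h2]; ring

lemma coeffP (y : ℚ) (k : ℕ) :
    PowerSeries.coeff (R := ℚ) k (Sser * expS y * Bser) =
      (2 / (k + 1)) * ((k + 1) * y ^ k - GenocchiPoly y (k + 1)) / k.factorial := by
  have h := congrArg (PowerSeries.coeff (R := ℚ) (k + 1)) (key_eq (y := y))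
  rw [coeff_succ_X_mul] at h
  rw [h]
  have h2 : PowerSeries.coeff (R := ℚ) (k+1) (C (R := ℚ) 2 * X * expS y) = 2 * (y ^ k / k.factorial) := by
    rw [mul_assoc, PowerSeries.coeff_C_mul, coeff_succ_X_mul]
    simp [expS]
  have h3 : PowerSeries.coeff (R := ℚ) (k+1) (C (R := ℚ) 2 * (Sser * expS y)) =
      2 * (GenocchiPoly y (k+1) / (k+1).factorial) := by
    rw [PowerSeries.coeff_C_mul]
    have : PowerSeries.coeff (R := ℚ) (k+1) (Sser * expS y) = GenocchiPoly y (k+1) / (k+1).factorial := by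
      rw [GenocchiPoly, Sser]
      field_simp
    rw [this]
  rw [map_sub, h2, h3]
  have hk : (k.factorial : ℚ) ≠ 0 := Nat.cast_ne_zero.mpr k.factorial_ne_zero
  have hk1 : ((k:ℚ) + 1) ≠ 0 := by positivity
  rw [Nat.factorial_succ]
  push_cast
  field_simp

lemma Binv : Bser * Bser⁻¹ = 1 := by
  apply PowerSeries.mul_inv_cancel
  rw [← coeff_zero_eq_constantCoeff_apply]
  simp [Bser]

/-- `G_n(x+y) = ∑_k C(n,k) (2/(k+1)) ((k+1) y^k − G_{k+1}(y)) B_{n-k}(x)`. -/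
theorem genocchi_bernoulli_relation (n : ℕ) (x y : ℚ) :
    GenocchiPoly (x + y) n =
      ∑ k ∈ Finset.range (n + 1),
        (n.choose k : ℚ) * (2 / (k + 1)) *
          ((k + 1) * y ^ k - GenocchiPoly y (k + 1)) * BernoulliPoly x (n - k) := by
  have hprod : Sser * expS (x + y) = (Sser * expS y * Bser) * (Bser⁻¹ * expS x) := by
    have : (Sser * expS y * Bser) * (Bser⁻¹ * expS x) =
        (Bser * Bser⁻¹) * (Sser * (expS y * expS x)) := by ring
    rw [this, Binv, one_mul, expS_mul, add_comm y x]
  have hG : GenocchiPoly (x + y) n = n.factorial * PowerSeries.coeff (R := ℚ) n (Sser * expS (x + y)) :=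
    rfl
  rw [hG, hprod, PowerSeries.coeff_mul, Nat.sum_antidiagonal_eq_sum_range_succ_mk, mul_sum]
  refine Finset.sum_congr rfl fun k hk => ?_
  have hkn : k ≤ n := Nat.lt_succ_iff.mp (Finset.mem_range.mp hk)
  rw [coeffP]
  have hB : PowerSeries.coeff (R := ℚ) (n - k) (Bser⁻¹ * expS x) =
      BernoulliPoly x (n - k) / (n - k).factorial := by
    rw [BernoulliPoly]
    have : (PowerSeries.mk fun k => ((k + 1).factorial : ℚ)⁻¹) = Bser := rfl
    rw [this]
    field_simp
  rw [hB]
  have hchoose : (n.choose k : ℚ) * k.factorial * (n - k).factorial = n.factorial := by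
    exact_mod_cast congrArg (Nat.cast : ℕ → ℚ) (Nat.choose_mul_factorial_mul_factorial hkn)
  have hk0 : (k.factorial : ℚ) ≠ 0 := Nat.cast_ne_zero.mpr k.factorial_ne_zero
  have hnk0 : ((n - k).factorial : ℚ) ≠ 0 := Nat.cast_ne_zero.mpr (n - k).factorial_ne_zero
  field_simp
  rw [← hchoose]
  ring
end

section
/- For n ∈ ℕ₀, the first-order q-Genocchi polynomials satisfy 𝔊_{n,q}(x,y) = ∑_{k=0}^n [n choose k]_q (2/[k+1]_q) ( [k+1]_q q^{k(k-1)/2} y^k − 𝔊_{k+1,q}(0,y) ) 𝔅_{n-k,q}(x,0). -/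
open PowerSeries Finset

lemma term_eq (Fn Fk Fm I G P Y c : ℂ) (hFk : Fk ≠ 0) (hFm : Fm ≠ 0) (hI : I ≠ 0) :
    Fn * (2 * (P * Y / Fk - G / (Fk * I)) * c) =
      Fn / (Fk * Fm) * (2 / I) * (I * P * Y - G) * (Fm * c) := by
  field_simp

/-- Relation between first-order `q`-Genocchi and `q`-Bernoulli polynomials. -/
theorem qGenocchi_qBernoulli_relation (q : ℂ) (hq : ∀ n : ℕ, qInt q (n + 1) ≠ 0)
    (n : ℕ) (x y : ℂ) :
    qGenocchi q 1 x y n =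
      ∑ k ∈ Finset.range (n + 1),
        qBinom q n k * (2 / qInt q (k + 1)) *
          (qInt q (k + 1) * q ^ (k * (k - 1) / 2) * y ^ k - qGenocchi q 1 0 y (k + 1)) *
          qBernoulli q x 0 (n - k) := by
  have hfact := qFact_ne_zero q hq
  set e := qExpSeries q 1 with he
  set E' := qExpSeries' q y with hE'
  set ex := qExpSeries q x with hex
  -- inverse of e+1
  have hc : constantCoeff (e + 1) ≠ 0 := by
    rw [he]
    simp only [qExpSeries, map_add, map_one, constantCoeff_mk]
    norm_num [qFact]
  have hu : (e + 1) * (e + 1)⁻¹ = 1 := PowerSeries.mul_inv_cancel _ hc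
  set u := (e + 1)⁻¹ with hu'
  -- the series M with X * M = e - 1
  set M : PowerSeries ℂ := PowerSeries.mk fun k => (qFact q (k + 1))⁻¹ with hMdef
  have hMc : constantCoeff M ≠ 0 := by
    rw [hMdef]
    simp [qFact, qInt]
  have hM : M * M⁻¹ = 1 := PowerSeries.mul_inv_cancel _ hMc
  have hXM : X * M = e - 1 := by
    ext m
    cases m with
    | zero => simp [hMdef, he, qExpSeries, qFact, coeff_one]
    | succ k =>
      simp [coeff_succ_X_mul, hMdef, he, qExpSeries, coeff_one]
  -- the series S with X * S = Genocchi series at (0, y)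
  set S : PowerSeries ℂ := PowerSeries.mk
    fun k => qGenocchi q 1 0 y (k + 1) / qFact q (k + 1) with hSdef
  have hG0 : qGenocchiSeries q 1 0 y = PowerSeries.C (2 : ℂ) * X * u * E' := by
    rw [qGenocchiSeries, pow_one, qExpSeries_zero, ← he, ← hE', ← hu']
    ring
  have hXS : X * S = qGenocchiSeries q 1 0 y := by
    ext m
    cases m with
    | zero =>
      rw [hG0]
      simp only [coeff_zero_eq_constantCoeff, map_mul, constantCoeff_X, mul_zero, zero_mul]
    | succ k =>
      rw [coeff_succ_X_mul, hSdef, coeff_mk, qGenocchi]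
      exact mul_div_cancel_left₀ _ (hfact (k + 1))
  set A : PowerSeries ℂ := PowerSeries.C (2 : ℂ) * (E' - S) with hAdef
  -- main series identity
  have hXne : (X : PowerSeries ℂ) ≠ 0 := X_ne_zero
  have hMne : M ≠ 0 := fun h => hMc (by rw [h]; exact map_zero _)
  have h2 : (PowerSeries.C (2 : ℂ) : PowerSeries ℂ) = 2 := map_ofNat (PowerSeries.C (R := ℂ)) 2
  have hXS2 : X * S = 2 * X * u * E' := by
    rw [hXS, hG0, h2]
  have key : qGenocchiSeries q 1 x y = A * M⁻¹ * ex := by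
    apply mul_left_cancel₀ (mul_ne_zero hXne hMne)
    calc X * M * qGenocchiSeries q 1 x y
        = (e - 1) * ((2 : PowerSeries ℂ) * X * u * ex * E') := by
          rw [← hXM, qGenocchiSeries, pow_one, h2]
      _ = (2 * (X * E') - 2 * (2 * X * u * E')) * ex := by
          linear_combination (2 * X * ex * E') * hu
      _ = (X * A) * ex * (M * M⁻¹) := by
          rw [hM, hAdef, h2, mul_one]
          linear_combination (2 * ex) * hXS2
      _ = X * M * (A * M⁻¹ * ex) := by ring
  -- coefficient extraction
  have hB : ∀ m : ℕ, qBernoulli q x 0 m = qFact q m * PowerSeries.coeff m (M⁻¹ * ex) := by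
    intro m
    rw [qBernoulli, ← hMdef, ← hex]
    congr 2
    rw [qExpSeries'_zero, mul_one]
  rw [qGenocchi, key, mul_assoc, PowerSeries.coeff_mul,
    Finset.Nat.sum_antidiagonal_eq_sum_range_succ_mk, Finset.mul_sum]
  refine Finset.sum_congr rfl fun k hk => ?_
  rw [Finset.mem_range, Nat.lt_succ_iff] at hk
  rw [hB, hAdef, hSdef]
  simp only [coeff_C_mul, map_sub, coeff_mk, hE', qExpSeries', coeff_mk]
  rw [qBinom]
  have h1 : qFact q (k + 1) = qFact q k * qInt q (k + 1) := rfl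
  rw [h1, div_eq_mul_inv (qGenocchi q 1 0 y (k + 1)), ← div_eq_mul_inv]
  exact term_eq _ _ _ _ _ _ _ _ (hfact k) (hfact (n - k)) (hq k)
end
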